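/- The group ℤ≀ℤ, with the word metric d from its canonical generating set, does not have Enflo type p for any p > 1. That is, for every p > 1 and every T > 0 there exist n ∈ ℕ and f : {−1,1}ⁿ → ℤ≀ℤ such that E[d(f(ε), f(−ε))^p] > T^p · Σ_{j=1}^n E[d(f(ε), f(ε^{(j)}))^p], where ε is uniform on {−1,1}ⁿ and ε^{(j)} is ε with its j-th coordinate flipped. -/

import Mathlib

open MeasureTheory ENNReal

/-- The word length distance on a group `G` associated to a generating set `S`. -/
noncomputable def wordDist {G : Type*} [Group G] (S : Set G) (x y : G) : ℕ :=
  sInf {n : ℕ | ∃ l : List G, l.length = n ∧ (∀ s ∈ l, s ∈ S) ∧ x⁻¹ * y = l.prod}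

/-- `S` is a symmetric generating set of `G`. -/
def IsSymmGenSet {G : Type*} [Group G] (S : Set G) : Prop :=
  (∀ s ∈ S, s⁻¹ ∈ S) ∧ Subgroup.closure S = ⊤

/-- There is a Lipschitz embedding of `(G, d)` into an `L_p` space with compression `α`. -/
def HasCompressionLp {G : Type*} (p : ℝ≥0∞) (d : G → G → ℕ) (α : ℝ) : Prop :=
  ∃ (Ω : Type) (_ : MeasurableSpace Ω) (μ : Measure Ω) (f : G → Lp ℝ p μ) (c C : ℝ),
    0 < c ∧ 0 < C ∧
      (∀ x y : G, x ≠ y → c * (d x y : ℝ) ^ α ≤ ‖f x - f y‖) ∧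
      (∀ x y : G, ‖f x - f y‖ ≤ C * (d x y : ℝ))

/-- The `L_p` compression exponent `α_p^*` of `(G, d)`; for `p = 2` this is the Hilbert
compression exponent `α^*`. -/
noncomputable def compressionExp {G : Type*} (p : ℝ≥0∞) (d : G → G → ℕ) : ℝ :=
  sSup {α : ℝ | 0 ≤ α ∧ HasCompressionLp p d α}
/-- The (restricted) wreath product `G ≀ H`: pairs `(f, x)` of a finitely supported function
`f : H → G` and an element `x ∈ H`, with product `(f,x)(g,y) = (z ↦ f(z)g(x⁻¹z), xy)`. -/
@[ext]
structure Wreath (G H : Type*) [One G] where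
  toFun : H → G
  pos : H
  finsupp : (Function.mulSupport toFun).Finite

namespace Wreath

variable {G H : Type*} [Group G] [Group H]

instance : One (Wreath G H) :=
  ⟨⟨fun _ => 1, 1, by
    have : Function.mulSupport (fun _ : H => (1 : G)) = ∅ :=
      Function.mulSupport_eq_empty_iff.mpr rfl
    rw [this]; exact Set.finite_empty⟩⟩

instance : Mul (Wreath G H) :=
  ⟨fun a b =>
    ⟨fun z => a.toFun z * b.toFun (a.pos⁻¹ * z), a.pos * b.pos, by
      have h2 : (Function.mulSupport fun z => b.toFun (a.pos⁻¹ * z)).Finite := by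
        have : (Function.mulSupport fun z => b.toFun (a.pos⁻¹ * z)) =
            (fun z : H => a.pos⁻¹ * z) ⁻¹' Function.mulSupport b.toFun :=
          Function.mulSupport_comp_eq_preimage _ _
        rw [this]
        exact b.finsupp.preimage (mul_right_injective a.pos⁻¹).injOn
      exact (a.finsupp.union h2).subset (Function.mulSupport_mul _ _)⟩⟩

instance : Inv (Wreath G H) :=
  ⟨fun a =>
    ⟨fun z => (a.toFun (a.pos * z))⁻¹, a.pos⁻¹, by
      have : (Function.mulSupport fun z => (a.toFun (a.pos * z))⁻¹) =
          (fun z : H => a.pos * z) ⁻¹' Function.mulSupport a.toFun := by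
        rw [show (fun z => (a.toFun (a.pos * z))⁻¹) = (fun z => a.toFun (a.pos * z))⁻¹ from rfl,
          Function.mulSupport_inv]
        exact Function.mulSupport_comp_eq_preimage _ _
      rw [this]
      exact a.finsupp.preimage (mul_right_injective a.pos).injOn⟩⟩

@[simp] lemma mul_toFun (a b : Wreath G H) :
    (a * b).toFun = fun z => a.toFun z * b.toFun (a.pos⁻¹ * z) := rfl

@[simp] lemma mul_pos' (a b : Wreath G H) : (a * b).pos = a.pos * b.pos := rfl

@[simp] lemma one_toFun : (1 : Wreath G H).toFun = fun _ => (1 : G) := rfl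

@[simp] lemma one_pos' : (1 : Wreath G H).pos = (1 : H) := rfl

@[simp] lemma inv_toFun (a : Wreath G H) :
    (a⁻¹).toFun = fun z => (a.toFun (a.pos * z))⁻¹ := rfl

@[simp] lemma inv_pos' (a : Wreath G H) : (a⁻¹).pos = a.pos⁻¹ := rfl

instance : Group (Wreath G H) where
  mul_assoc a b c := by
    refine Wreath.ext ?_ ?_
    · funext z; simp [mul_assoc, mul_inv_rev]
    · simp [mul_assoc]
  one_mul a := by
    refine Wreath.ext ?_ ?_
    · funext z; simp
    · simp
  mul_one a := by
    refine Wreath.ext ?_ ?_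
    · funext z; simp
    · simp
  inv_mul_cancel a := by
    refine Wreath.ext ?_ ?_
    · funext z; simp
    · simp

end Wreath

open Classical in
/-- The canonical generating set of the wreath product `G ≀ H` associated with a generating
set `S` of `G` and a generating set `T` of `H`: the elements `(𝟙, t)` for `t ∈ T` and
`(δ_s, e_H)` for `s ∈ S`, where `δ_s` takes the value `s` at `e_H` and `e_G` elsewhere. -/
noncomputable def wreathGens {G H : Type*} [Group G] [Group H] (S : Set G) (T : Set H) :
    Set (Wreath G H) :=
  {w | w.toFun = (fun _ => 1) ∧ w.pos ∈ T} ∪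
    {w | w.pos = 1 ∧ ∃ s ∈ S, w.toFun = fun z => if z = 1 then s else 1}

/-- The generating set `{±1}` of the (multiplicative) group of integers. -/
def zGens : Set (Multiplicative ℤ) :=
  {Multiplicative.ofAdd 1, Multiplicative.ofAdd (-1)}

namespace NoEnflo

open Multiplicative

abbrev W := Wreath (Multiplicative ℤ) (Multiplicative ℤ)

noncomputable def gens : Set W := wreathGens zGens zGens

/-- Pure shift element. -/
def Sh (a : ℤ) : W :=
  ⟨fun _ => 1, ofAdd a, by
    have : Function.mulSupport (fun _ : Multiplicative ℤ => (1 : Multiplicative ℤ)) = ∅ :=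
      Function.mulSupport_eq_empty_iff.mpr rfl
    rw [this]; exact Set.finite_empty⟩

/-- Lamp at the origin. -/
def Lm (m : ℤ) : W :=
  ⟨fun z => if z = 1 then ofAdd m else 1, 1,
    Set.Finite.subset (Set.finite_singleton 1) (by
      intro z hz
      rw [Function.mem_mulSupport] at hz
      by_contra h
      exact hz (if_neg h))⟩

/-- Lamp with value `m` at position `a`. -/
def Dl (a m : ℤ) : W :=
  ⟨fun z => if z = ofAdd a then ofAdd m else 1, 1,
    Set.Finite.subset (Set.finite_singleton (ofAdd a)) (by
      intro z hz
      rw [Function.mem_mulSupport] at hz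
      by_contra h
      exact hz (if_neg h))⟩

lemma Sh_mul (a b : ℤ) : Sh a * Sh b = Sh (a + b) := by
  refine Wreath.ext ?_ ?_
  · funext z; simp [Sh]
  · simp [Sh, ofAdd_add]

lemma Sh_inv (a : ℤ) : (Sh a)⁻¹ = Sh (-a) := by
  refine Wreath.ext ?_ ?_
  · funext z; simp [Sh]
  · simp [Sh, ofAdd_neg]

lemma Lm_mul (a b : ℤ) : Lm a * Lm b = Lm (a + b) := by
  refine Wreath.ext ?_ ?_
  · funext z
    simp only [Wreath.mul_toFun, Lm]
    by_cases hz : z = 1 <;> simp [hz, ofAdd_add]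
  · simp [Lm]

lemma Sh_pow (k : ℕ) (a : ℤ) : (Sh a) ^ k = Sh (k * a) := by
  induction k with
  | zero =>
    refine Wreath.ext ?_ ?_
    · funext z; simp [Sh]
    · simp [Sh]
  | succ k ih =>
    rw [pow_succ, ih, Sh_mul]
    congr 1
    push_cast
    ring

lemma Lm_pow (k : ℕ) (a : ℤ) : (Lm a) ^ k = Lm (k * a) := by
  induction k with
  | zero =>
    refine Wreath.ext ?_ ?_
    · funext z; simp [Lm]
    · simp [Lm]
  | succ k ih =>
    rw [pow_succ, ih, Lm_mul]
    congr 1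
    push_cast
    ring

lemma conj_lamp (a m : ℤ) : Sh a * Lm m * Sh (-a) = Dl a m := by
  refine Wreath.ext ?_ ?_
  · funext z
    simp only [Wreath.mul_toFun, Sh, Lm, Dl, one_mul]
    have h : (ofAdd a)⁻¹ * z = 1 ↔ z = ofAdd a := by
      constructor
      · intro h; have := inv_mul_eq_one.mp h; exact this.symm ▸ rfl
      · intro h; subst h; exact inv_mul_cancel _
    by_cases hz : z = ofAdd a
    · simp [hz, h.mpr hz]
    · rw [if_neg (fun hh => hz (h.mp hh)), if_neg hz]
      simp
  · simp [Sh, Lm, Dl, ← ofAdd_add]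

/-- The element with lamp value `c i` at position `i`, for `i < n`, at the origin. -/
def P {n : ℕ} (c : Fin n → ℤ) : W :=
  ⟨fun z => ofAdd (∑ i : Fin n, if z = ofAdd (i : ℤ) then c i else 0), 1, by
    apply Set.Finite.subset (Set.finite_range (fun i : Fin n => ofAdd (i : ℤ)))
    intro z hz
    rw [Function.mem_mulSupport] at hz
    by_contra h
    apply hz
    have : ∀ i : Fin n, (if z = ofAdd ((i : Fin n) : ℤ) then c i else 0) = 0 := by
      intro i
      rw [if_neg]
      intro e
      exact h ⟨i, e.symm⟩
    rw [Finset.sum_congr rfl (fun i _ => this i)]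
    simp⟩

lemma P_mul {n : ℕ} (a b : Fin n → ℤ) : P a * P b = P (a + b) := by
  refine Wreath.ext ?_ ?_
  · funext z
    simp only [Wreath.mul_toFun, P, inv_one, one_mul, ← ofAdd_add, ← Finset.sum_add_distrib]
    congr 1
    refine Finset.sum_congr rfl fun i _ => ?_
    by_cases hz : z = ofAdd ((i : Fin n) : ℤ) <;> simp [hz]
  · simp [P]

lemma P_inv {n : ℕ} (a : Fin n → ℤ) : (P a)⁻¹ = P (-a) := by
  refine Wreath.ext ?_ ?_
  · funext z
    simp only [Wreath.inv_toFun, P, one_mul, ← ofAdd_neg, ← Finset.sum_neg_distrib]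
    congr 1
    refine Finset.sum_congr rfl fun i _ => ?_
    by_cases hz : z = ofAdd ((i : Fin n) : ℤ) <;> simp [hz]
  · simp [P]

lemma P_zero {n : ℕ} : P (0 : Fin n → ℤ) = 1 := by
  refine Wreath.ext ?_ ?_
  · funext z; simp [P]
  · simp [P]

lemma ofAdd_coe_inj {n : ℕ} {i j : Fin n} :
    ofAdd ((i : Fin n) : ℤ) = ofAdd ((j : Fin n) : ℤ) ↔ i = j := by
  constructor
  · intro h
    have h2 : ((i : Fin n) : ℤ) = ((j : Fin n) : ℤ) := by
      exact_mod_cast Multiplicative.ofAdd.injective h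
    exact Fin.ext (by exact_mod_cast h2)
  · rintro rfl; rfl

lemma P_single {n : ℕ} (j : Fin n) (m : ℤ) : P (Pi.single j m) = Dl (j : ℤ) m := by
  refine Wreath.ext ?_ ?_
  · funext z
    simp only [P, Dl]
    have : (∑ i : Fin n, if z = ofAdd ((i : Fin n) : ℤ) then Pi.single j m i else 0) =
        if z = ofAdd ((j : Fin n) : ℤ) then m else 0 := by
      rw [Finset.sum_eq_single j]
      · simp
      · intro i _ hij
        rw [Pi.single_eq_of_ne hij]
        simp
      · simp
    rw [this]
    by_cases hz : z = ofAdd ((j : Fin n) : ℤ) <;> simp [hz]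
  · simp [P, Dl]

lemma P_list {n : ℕ} (l : List (Fin n → ℤ)) : (l.map P).prod = P l.sum := by
  induction l with
  | nil => simp [P_zero]
  | cons a l ih => simp [ih, P_mul]

/-- generators -/
lemma Sh_one_mem : Sh 1 ∈ gens := Or.inl ⟨rfl, Or.inl rfl⟩

lemma Sh_neg_one_mem : Sh (-1) ∈ gens := Or.inl ⟨rfl, Or.inr rfl⟩

lemma Lm_one_mem : Lm 1 ∈ gens := by
  refine Or.inr ⟨rfl, ofAdd 1, Or.inl rfl, ?_⟩
  funext z; by_cases h : z = 1 <;> simp [Lm, h]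

lemma Lm_neg_one_mem : Lm (-1) ∈ gens := by
  refine Or.inr ⟨rfl, ofAdd (-1), Or.inr rfl, ?_⟩
  funext z; by_cases h : z = 1 <;> simp [Lm, h]

lemma Lm_mem {s : ℤ} (hs : s = 1 ∨ s = -1) : Lm s ∈ gens := by
  rcases hs with rfl | rfl
  · exact Lm_one_mem
  · exact Lm_neg_one_mem

/-- The word realizing the lamp `Dl j (k*s)`. -/
def wordFor (j k : ℕ) (s : ℤ) : List W :=
  List.replicate j (Sh 1) ++ (List.replicate k (Lm s) ++ List.replicate j (Sh (-1)))

lemma wordFor_length (j k : ℕ) (s : ℤ) : (wordFor j k s).length = 2 * j + k := by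
  simp [wordFor]; ring

lemma wordFor_mem {j k : ℕ} {s : ℤ} (hs : s = 1 ∨ s = -1) :
    ∀ g ∈ wordFor j k s, g ∈ gens := by
  intro g hg
  simp only [wordFor, List.mem_append, List.mem_replicate] at hg
  rcases hg with ⟨_, rfl⟩ | ⟨_, rfl⟩ | ⟨_, rfl⟩
  · exact Sh_one_mem
  · exact Lm_mem hs
  · exact Sh_neg_one_mem

lemma wordFor_prod (j k : ℕ) (s : ℤ) :
    (wordFor j k s).prod = Dl (j : ℤ) ((k : ℤ) * s) := by
  simp only [wordFor, List.prod_append, List.prod_replicate, Sh_pow, Lm_pow]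
  rw [← mul_assoc]
  have h1 : ((j : ℤ) * 1) = (j : ℤ) := by ring
  have h2 : ((j : ℤ) * (-1)) = -(j : ℤ) := by ring
  rw [h1, h2, conj_lamp]

/-- Total lamp variation. -/
noncomputable def Phi (w : W) : ℤ := ∑ᶠ z : Multiplicative ℤ, |toAdd (w.toFun z)|

lemma Phi_support_subset (w : W) :
    Function.support (fun z => |toAdd (w.toFun z)|) ⊆ Function.mulSupport w.toFun := by
  intro z hz
  rw [Function.mem_support] at hz
  rw [Function.mem_mulSupport]
  intro h
  apply hz
  rw [h]
  simp

lemma Phi_support_finite (w : W) :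
    (Function.support (fun z => |toAdd (w.toFun z)|)).Finite :=
  w.finsupp.subset (Phi_support_subset w)

lemma Phi_one : Phi (1 : W) = 0 := by
  unfold Phi
  simp

lemma toAdd_gen_abs {s : Multiplicative ℤ} (hs : s ∈ zGens) : |toAdd s| = 1 := by
  rcases hs with rfl | rfl <;> simp

lemma Phi_mul_le (w : W) {g : W} (hg : g ∈ gens) : Phi (w * g) ≤ Phi w + 1 := by
  rcases hg with ⟨hfun, _⟩ | ⟨hpos, s, hs, hfun⟩
  · have h : (w * g).toFun = w.toFun := by
      funext z
      simp only [Wreath.mul_toFun, hfun]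
      simp
    have : Phi (w * g) = Phi w := by unfold Phi; rw [h]
    omega
  · set a : ℤ := toAdd (w.toFun w.pos) with ha
    set c : ℤ := |a + toAdd s| - |a| with hc
    have hcond : ∀ z : Multiplicative ℤ, (w.pos⁻¹ * z = 1) ↔ z = w.pos := by
      intro z
      constructor
      · intro h
        have := inv_mul_eq_one.mp h
        exact this.symm
      · rintro rfl
        exact inv_mul_cancel _
    have hfun2 : (fun z => |toAdd ((w * g).toFun z)|) =
        (fun z => |toAdd (w.toFun z)| + if z = w.pos then c else 0) := by
      funext z
      simp only [Wreath.mul_toFun, hfun]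
      by_cases hz : z = w.pos
      · rw [if_pos ((hcond z).mpr hz), if_pos hz, hz]
        simp only [toAdd_mul]
        rw [hc, ha]
        ring
      · rw [if_neg (fun hh => hz ((hcond z).mp hh)), if_neg hz]
        simp
    have habs : |c| ≤ 1 := by
      have h1 : |a + toAdd s| - |a| ≤ |toAdd s| := by
        have := abs_add_le a (toAdd s)
        linarith
      have h2 : |a| - |a + toAdd s| ≤ |toAdd s| := by
        have h3 := abs_sub_abs_le_abs_sub a (a + toAdd s)
        have h4 : a - (a + toAdd s) = -(toAdd s) := by ring
        rw [h4, abs_neg] at h3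
        linarith
      rw [abs_le]
      constructor <;> [skip; exact (toAdd_gen_abs hs) ▸ h1]
      have := (toAdd_gen_abs hs) ▸ h2
      linarith
    have hfin2 : (Function.support (fun z : Multiplicative ℤ =>
        if z = w.pos then c else 0)).Finite := by
      apply Set.Finite.subset (Set.finite_singleton w.pos)
      intro z hz
      rw [Function.mem_support] at hz
      by_contra h
      exact hz (if_neg h)
    have hsum : ∑ᶠ z : Multiplicative ℤ, (if z = w.pos then c else 0) = c := by
      rw [finsum_eq_single _ w.pos]
      · simp
      · intro x hx; exact if_neg hx
    unfold Phi
    rw [hfun2]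
    rw [finsum_add_distrib (Phi_support_finite w) hfin2]
    rw [hsum]
    have : c ≤ 1 := le_trans (le_abs_self c) habs
    omega

lemma Phi_list_prod : ∀ l : List W, (∀ g ∈ l, g ∈ gens) → Phi l.prod ≤ (l.length : ℤ) := by
  intro l
  induction l using List.reverseRecOn with
  | nil => intro _; simp [Phi_one]
  | append_singleton l g ih =>
    intro h
    rw [List.prod_append, List.prod_singleton]
    have h1 : Phi (l.prod * g) ≤ Phi l.prod + 1 :=
      Phi_mul_le l.prod (h g (by simp))
    have h2 : Phi l.prod ≤ (l.length : ℤ) := ih (fun x hx => h x (by simp [hx]))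
    simp only [List.length_append, List.length_singleton]
    push_cast
    linarith

lemma Phi_le_wordDist (x y : W)
    (hne : {n : ℕ | ∃ l : List W, l.length = n ∧ (∀ s ∈ l, s ∈ gens) ∧
      x⁻¹ * y = l.prod}.Nonempty) :
    Phi (x⁻¹ * y) ≤ (wordDist gens x y : ℤ) := by
  obtain ⟨l, hlen, hmem, hprod⟩ := Nat.sInf_mem hne
  rw [hprod]
  calc Phi l.prod ≤ (l.length : ℤ) := Phi_list_prod l hmem
  _ = (wordDist gens x y : ℤ) := by rw [hlen]; rfl

lemma Phi_P {n : ℕ} (c : Fin n → ℤ) : Phi (P c) = ∑ i : Fin n, |c i| := by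
  unfold Phi
  have hsub : Function.support (fun z => |toAdd ((P c).toFun z)|) ⊆
      ↑(Finset.univ.image (fun i : Fin n => ofAdd ((i : Fin n) : ℤ))) := by
    intro z hz
    rw [Function.mem_support] at hz
    simp only [Finset.coe_image, Finset.coe_univ, Set.image_univ, Set.mem_range]
    by_contra h
    push_neg at h
    apply hz
    have : ∀ i : Fin n, (if z = ofAdd ((i : Fin n) : ℤ) then c i else 0) = 0 := by
      intro i
      rw [if_neg (fun e => h i e.symm)]
    simp only [P]
    rw [Finset.sum_congr rfl (fun i _ => this i)]
    simp
  rw [finsum_eq_finset_sum_of_support_subset _ hsub]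
  rw [Finset.sum_image (fun i _ j _ h => ofAdd_coe_inj.mp h)]
  refine Finset.sum_congr rfl fun i _ => ?_
  simp only [P]
  congr 1
  have : ∀ i' : Fin n, (if ofAdd ((i : Fin n) : ℤ) = ofAdd ((i' : Fin n) : ℤ)
      then c i' else 0) = (if i = i' then c i' else 0) := by
    intro i'
    by_cases h : i = i'
    · rw [if_pos (by rw [h]), if_pos h]
    · rw [if_neg (fun e => h (ofAdd_coe_inj.mp e)), if_neg h]
  rw [Finset.sum_congr rfl (fun i' _ => this i')]
  rw [Finset.sum_ite_eq]
  simp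

def chi (b : Bool) : ℤ := if b then 1 else -1

lemma chi_cases (b : Bool) : chi b = 1 ∨ chi b = -1 := by cases b <;> simp [chi]

lemma neg_chi_cases (b : Bool) : -chi b = 1 ∨ -chi b = -1 := by cases b <;> simp [chi]

/-- The cube map: lamp value `n · χ(ε i)` at position `i`. -/
noncomputable def F (n : ℕ) (ε : Fin n → Bool) : W := P (fun i => (n : ℤ) * chi (ε i))

lemma edge_eq {n : ℕ} (ε : Fin n → Bool) (j : Fin n) :
    (F n ε)⁻¹ * F n (Function.update ε j (!ε j)) =
      P (Pi.single j (((2 * n : ℕ) : ℤ) * (-chi (ε j)))) := by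
  unfold F
  rw [P_inv, P_mul]
  congr 1
  funext i
  by_cases h : i = j
  · subst h
    rw [Pi.single_eq_same]
    simp only [Pi.add_apply, Function.update_self]
    cases hε : ε i <;> simp [chi, hε] <;> push_cast <;> ring
  · rw [Pi.single_eq_of_ne h]
    simp only [Pi.add_apply]
    rw [Function.update_of_ne h]
    simp

lemma diag_eq {n : ℕ} (ε : Fin n → Bool) :
    (F n ε)⁻¹ * F n (fun i => !ε i) =
      P (fun i => ((2 * n : ℕ) : ℤ) * (-chi (ε i))) := by
  unfold F
  rw [P_inv, P_mul]
  congr 1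
  funext i
  simp only [Pi.add_apply]
  cases hε : ε i <;> simp [chi, hε] <;> push_cast <;> ring

lemma edge_wordDist_le {n : ℕ} (ε : Fin n → Bool) (j : Fin n) :
    wordDist (wreathGens zGens zGens) (F n ε) (F n (Function.update ε j (!ε j))) ≤
      2 * (j : ℕ) + 2 * n := by
  apply Nat.sInf_le
  refine ⟨wordFor (j : ℕ) (2 * n) (-chi (ε j)), wordFor_length _ _ _,
    wordFor_mem (neg_chi_cases (ε j)), ?_⟩
  rw [edge_eq, P_single, wordFor_prod]

lemma list_prod_bind {α M : Type*} [Monoid M] (l : List α) (f : α → List M) :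
    (l.flatMap f).prod = (l.map fun a => (f a).prod).prod := by
  induction l with
  | nil => simp
  | cons a l ih => simp [List.flatMap_cons, List.prod_append, ih]

lemma diag_word {n : ℕ} (ε : Fin n → Bool) :
    ((List.finRange n).flatMap fun j : Fin n =>
      wordFor (j : ℕ) (2 * n) (-chi (ε j))).prod =
      (F n ε)⁻¹ * F n (fun i => !ε i) := by
  rw [diag_eq, list_prod_bind]
  have h1 : ((List.finRange n).map fun j : Fin n =>
      (wordFor (j : ℕ) (2 * n) (-chi (ε j))).prod) =
      (((List.finRange n).map fun j : Fin n =>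
        Pi.single j (((2 * n : ℕ) : ℤ) * (-chi (ε j)))).map P) := by
    rw [List.map_map]
    refine List.map_congr_left fun j _ => ?_
    rw [wordFor_prod, Function.comp_apply, P_single]
  rw [h1, P_list]
  congr 1
  have h2 : ((List.finRange n).map fun j : Fin n =>
      Pi.single j (((2 * n : ℕ) : ℤ) * (-chi (ε j)))).sum =
      ∑ j : Fin n, Pi.single j (((2 * n : ℕ) : ℤ) * (-chi (ε j))) := by
    rw [Fin.sum_univ_def]
  rw [h2, Finset.univ_sum_single]

lemma diag_wordDist_ge {n : ℕ} (ε : Fin n → Bool) :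
    ((2 * n * n : ℕ) : ℤ) ≤
      (wordDist (wreathGens zGens zGens) (F n ε) (F n (fun i => !ε i)) : ℤ) := by
  have hne : {m : ℕ | ∃ l : List W, l.length = m ∧ (∀ s ∈ l, s ∈ gens) ∧
      (F n ε)⁻¹ * F n (fun i => !ε i) = l.prod}.Nonempty := by
    refine ⟨_, (List.finRange n).flatMap fun j : Fin n =>
      wordFor (j : ℕ) (2 * n) (-chi (ε j)), rfl, ?_, (diag_word ε).symm⟩
    intro g hg
    rw [List.mem_flatMap] at hg
    obtain ⟨j, _, hj⟩ := hg
    exact wordFor_mem (neg_chi_cases (ε j)) g hj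
  have hphi := Phi_le_wordDist (F n ε) (F n (fun i => !ε i)) hne
  rw [diag_eq, Phi_P] at hphi
  have hterm : ∀ i : Fin n, |((2 * n : ℕ) : ℤ) * (-chi (ε i))| = ((2 * n : ℕ) : ℤ) := by
    intro i
    rw [abs_mul]
    rcases neg_chi_cases (ε i) with h | h <;> rw [h] <;> simp
  rw [Finset.sum_congr rfl (fun i _ => hterm i), Finset.sum_const, Finset.card_univ,
    Fintype.card_fin, nsmul_eq_mul] at hphi
  refine le_trans (le_of_eq ?_) hphi
  push_cast
  ring

lemma key_ineq (p T : ℝ) (hp : 1 < p) (hT : 0 < T) (n : ℕ)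
    (hn : ((2 * T) ^ p) ^ ((p - 1)⁻¹) < (n : ℝ)) (hn1 : 1 ≤ (n : ℝ)) :
    T ^ p * ((n : ℝ) * (4 * (n : ℝ)) ^ p) < (2 * (n : ℝ) * (n : ℝ)) ^ p := by
  have hn0 : (0 : ℝ) < n := by linarith
  have hp1 : (0 : ℝ) < p - 1 := by linarith
  have h2T : (0 : ℝ) < 2 * T := by linarith
  have hB : (0 : ℝ) ≤ ((2 * T) ^ p) ^ ((p - 1)⁻¹) :=
    Real.rpow_nonneg (Real.rpow_nonneg h2T.le p) _
  have h1 : (2 * T) ^ p < (n : ℝ) ^ (p - 1) := by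
    have h := Real.rpow_lt_rpow hB hn hp1
    rwa [← Real.rpow_mul (Real.rpow_nonneg h2T.le p), inv_mul_cancel₀ (ne_of_gt hp1),
      Real.rpow_one] at h
  have e1 : ((4 : ℝ) * (n : ℝ)) ^ p = 4 ^ p * (n : ℝ) ^ p :=
    Real.mul_rpow (by norm_num) hn0.le
  have e2 : ((2 : ℝ) * (n : ℝ) * (n : ℝ)) ^ p = 2 ^ p * ((n : ℝ) ^ p * (n : ℝ) ^ p) := by
    have h : (2 : ℝ) * (n : ℝ) * (n : ℝ) = 2 * ((n : ℝ) * (n : ℝ)) := by ring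
    rw [h, Real.mul_rpow (by norm_num) (by positivity), Real.mul_rpow hn0.le hn0.le]
  have e3 : (4 : ℝ) ^ p = 2 ^ p * 2 ^ p := by
    rw [← Real.mul_rpow (by norm_num) (by norm_num)]
    norm_num
  have e4 : ((2 : ℝ) * T) ^ p = 2 ^ p * T ^ p := Real.mul_rpow (by norm_num) hT.le
  have e5 : (n : ℝ) ^ p = (n : ℝ) * (n : ℝ) ^ (p - 1) := by
    have h : p = 1 + (p - 1) := by ring
    rw [h, Real.rpow_add hn0, Real.rpow_one]
    ring_nf
  rw [e1, e2]
  calc T ^ p * ((n : ℝ) * (4 ^ p * (n : ℝ) ^ p))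
      = ((2 * T) ^ p * (n : ℝ)) * (2 ^ p * (n : ℝ) ^ p) := by rw [e3, e4]; ring
    _ < ((n : ℝ) ^ (p - 1) * (n : ℝ)) * (2 ^ p * (n : ℝ) ^ p) := by
        apply mul_lt_mul_of_pos_right _ (by positivity)
        exact mul_lt_mul_of_pos_right h1 hn0
    _ = 2 ^ p * ((n : ℝ) ^ p * (n : ℝ) ^ p) := by
        rw [mul_comm ((n : ℝ) ^ (p - 1)) (n : ℝ), ← e5]
        ring

end NoEnflo
/-- `ℤ ≀ ℤ` (with the word metric `d` of its canonical generating set) does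
not have Enflo type `p` for any `p > 1`: for every `p > 1` and `T > 0` there are `n` and
`f : {−1,1}ⁿ → ℤ ≀ ℤ` for which the Enflo type `p` inequality with constant `T` fails.
Here the hypercube `{−1,1}ⁿ` is modelled by `Fin n → Bool`, `ε` is uniform, and the `j`-th
coordinate flip is `Function.update ε j (!ε j)`. -/
theorem wreath_ZZ_no_enflo_type :
    ∀ p : ℝ, 1 < p → ∀ T : ℝ, 0 < T →
      ∃ (n : ℕ) (f : (Fin n → Bool) → Wreath (Multiplicative ℤ) (Multiplicative ℤ)),
        T ^ p * ∑ j : Fin n, ((∑ ε : Fin n → Bool,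
            (wordDist (wreathGens zGens zGens) (f ε)
              (f (Function.update ε j (!ε j))) : ℝ) ^ p) / 2 ^ n) <
        (∑ ε : Fin n → Bool,
            (wordDist (wreathGens zGens zGens) (f ε) (f (fun j => !ε j)) : ℝ) ^ p) / 2 ^ n := by
  intro p hp T hT
  obtain ⟨n, hn⟩ := exists_nat_gt (max (((2 * T) ^ p) ^ ((p - 1)⁻¹)) 1)
  have hnB : ((2 * T) ^ p) ^ ((p - 1)⁻¹) < (n : ℝ) := lt_of_le_of_lt (le_max_left _ _) hn
  have hn1 : (1 : ℝ) < (n : ℝ) := lt_of_le_of_lt (le_max_right _ _) hn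
  have hn0 : (0 : ℝ) < (n : ℝ) := by linarith
  have hp0 : (0 : ℝ) ≤ p := by linarith
  have hcard : (Finset.univ : Finset (Fin n → Bool)).card = 2 ^ n := by
    rw [Finset.card_univ]
    simp
  have h2n : (0 : ℝ) < 2 ^ n := by positivity
  refine ⟨n, NoEnflo.F n, ?_⟩
  -- edge upper bound
  have hedge : ∀ (ε : Fin n → Bool) (j : Fin n),
      ((wordDist (wreathGens zGens zGens) (NoEnflo.F n ε)
        (NoEnflo.F n (Function.update ε j (!ε j))) : ℝ)) ^ p ≤ (4 * (n : ℝ)) ^ p := by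
    intro ε j
    apply Real.rpow_le_rpow (by positivity) _ hp0
    have h1 := NoEnflo.edge_wordDist_le ε j
    have h2 : 2 * (j : ℕ) + 2 * n ≤ 4 * n := by have := j.is_lt; omega
    have h3 := le_trans h1 h2
    calc ((wordDist (wreathGens zGens zGens) (NoEnflo.F n ε)
        (NoEnflo.F n (Function.update ε j (!ε j))) : ℝ)) ≤ ((4 * n : ℕ) : ℝ) := by
          exact_mod_cast h3
      _ = 4 * (n : ℝ) := by push_cast; ring
  -- diagonal lower bound
  have hdiag : ∀ ε : Fin n → Bool,
      (2 * (n : ℝ) * (n : ℝ)) ^ p ≤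
      ((wordDist (wreathGens zGens zGens) (NoEnflo.F n ε)
        (NoEnflo.F n (fun i => !ε i)) : ℝ)) ^ p := by
    intro ε
    apply Real.rpow_le_rpow (by positivity) _ hp0
    have h1 := NoEnflo.diag_wordDist_ge ε
    calc (2 * (n : ℝ) * (n : ℝ)) = ((2 * n * n : ℕ) : ℝ) := by push_cast; ring
      _ ≤ _ := by exact_mod_cast h1
  calc T ^ p * ∑ j : Fin n, ((∑ ε : Fin n → Bool,
          (wordDist (wreathGens zGens zGens) (NoEnflo.F n ε)
            (NoEnflo.F n (Function.update ε j (!ε j))) : ℝ) ^ p) / 2 ^ n)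
      ≤ T ^ p * ∑ j : Fin n, (4 * (n : ℝ)) ^ p := by
        apply mul_le_mul_of_nonneg_left _ (Real.rpow_nonneg hT.le p)
        apply Finset.sum_le_sum
        intro j _
        rw [div_le_iff₀ h2n]
        calc (∑ ε : Fin n → Bool,
            (wordDist (wreathGens zGens zGens) (NoEnflo.F n ε)
              (NoEnflo.F n (Function.update ε j (!ε j))) : ℝ) ^ p)
            ≤ ∑ _ε : Fin n → Bool, (4 * (n : ℝ)) ^ p :=
              Finset.sum_le_sum fun ε _ => hedge ε j
          _ = (4 * (n : ℝ)) ^ p * 2 ^ n := by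
              rw [Finset.sum_const, hcard, nsmul_eq_mul]
              push_cast
              ring
    _ = T ^ p * ((n : ℝ) * (4 * (n : ℝ)) ^ p) := by
        rw [Finset.sum_const, Finset.card_univ, Fintype.card_fin, nsmul_eq_mul]
    _ < (2 * (n : ℝ) * (n : ℝ)) ^ p := NoEnflo.key_ineq p T hp hT n hnB hn1.le
    _ ≤ (∑ ε : Fin n → Bool,
          (wordDist (wreathGens zGens zGens) (NoEnflo.F n ε)
            (NoEnflo.F n (fun j => !ε j)) : ℝ) ^ p) / 2 ^ n := by
        rw [le_div_iff₀ h2n]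
        calc (2 * (n : ℝ) * (n : ℝ)) ^ p * 2 ^ n
            = ∑ _ε : Fin n → Bool, (2 * (n : ℝ) * (n : ℝ)) ^ p := by
              rw [Finset.sum_const, hcard, nsmul_eq_mul]
              push_cast
              ring
          _ ≤ _ := Finset.sum_le_sum fun ε _ => hdiag ε
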